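/- Multiplication by the metric g and the contraction c are adjoint with respect to the pointwise inner product on double forms: ⟨gω₁, ω₂⟩ = ⟨ω₁, cω₂⟩ for all double forms ω₁ of bidegree (p,q) and ω₂ of bidegree (p+1,q+1). -/

import Mathlib

open scoped BigOperators
open scoped Classical

noncomputable section

/-- A `(p,q)`-double form on `ℝⁿ`, given by its components with respect to the
standard orthonormal basis: a scalar-valued function of a row multi-index and a
column multi-index. -/
def DForm (n p q : ℕ) : Type := (Fin p → Fin n) → (Fin q → Fin n) → ℝ

namespace DForm

variable {n : ℕ}

/-- Transport a double form along equalities of the bidegrees. -/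
def cast' {p q p' q' : ℕ} (hp : p = p') (hq : q = q') (ω : DForm n p q) :
    DForm n p' q' :=
  fun I J => ω (fun a => I (Fin.cast hp a)) (fun b => J (Fin.cast hq b))

/-- A double form is alternating in each of its two blocks of arguments. -/
def IsAlt {p q : ℕ} (ω : DForm n p q) : Prop :=
  (∀ (σ : Equiv.Perm (Fin p)) (I : Fin p → Fin n) (J : Fin q → Fin n),
      ω (I ∘ σ) J = ((Equiv.Perm.sign σ : ℤ) : ℝ) * ω I J) ∧
  (∀ (τ : Equiv.Perm (Fin q)) (I : Fin p → Fin n) (J : Fin q → Fin n),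
      ω I (J ∘ τ) = ((Equiv.Perm.sign τ : ℤ) : ℝ) * ω I J) ∧
  (∀ (I : Fin p → Fin n) (J : Fin q → Fin n),
      (¬ Function.Injective I ∨ ¬ Function.Injective J) → ω I J = 0)

/-- A `(p,p)`-double form is symmetric. -/
def IsSym {p : ℕ} (ω : DForm n p p) : Prop := ∀ I J, ω I J = ω J I

/-- The exterior (Kulkarni–Nomizu type) product of double forms:
`(α₁⊗β₁)·(α₂⊗β₂) = (α₁∧α₂)⊗(β₁∧β₂)` in components. -/
def mul {p q r s : ℕ} (ω : DForm n p q) (θ : DForm n r s) :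
    DForm n (p + r) (q + s) :=
  fun I J =>
    (((p.factorial * r.factorial * q.factorial * s.factorial : ℕ) : ℝ))⁻¹ *
      ∑ σ : Equiv.Perm (Fin (p + r)), ∑ τ : Equiv.Perm (Fin (q + s)),
        ((Equiv.Perm.sign σ : ℤ) : ℝ) * ((Equiv.Perm.sign τ : ℤ) : ℝ) *
          ω (fun a => I (σ (Fin.castAdd r a))) (fun b => J (τ (Fin.castAdd s b))) *
          θ (fun a => I (σ (Fin.natAdd p a))) (fun b => J (τ (Fin.natAdd q b)))

/-- The contraction map `c : D^{p+1,q+1} → D^{p,q}` (trace over the orthonormal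
basis in the first slot of each block). -/
def contr {p q : ℕ} (ω : DForm n (p + 1) (q + 1)) : DForm n p q :=
  fun I J => ∑ i : Fin n, ω (Fin.cons i I) (Fin.cons i J)

/-- Total version of the contraction (zero when a bidegree is `0`). -/
def contr' : {p q : ℕ} → DForm n p q → DForm n (p - 1) (q - 1)
  | _ + 1, _ + 1, ω => contr ω
  | 0, _, _ => fun _ _ => 0
  | _ + 1, 0, _ => fun _ _ => 0

/-- Iterated contraction `c^k : D^{p+k,q+k} → D^{p,q}`. -/
def cIter {p q : ℕ} : (k : ℕ) → DForm n (p + k) (q + k) → DForm n p q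
  | 0, ω => ω
  | k + 1, ω => cIter k (contr ω)

/-- The full contraction `c^p` of a `(p,p)`-double form, a scalar. -/
def fullc {p : ℕ} (ω : DForm n p p) : ℝ :=
  cIter (p := 0) (q := 0) p
    (cast' (Nat.zero_add p).symm (Nat.zero_add p).symm ω) Fin.elim0 Fin.elim0

/-- The metric of `ℝⁿ` as a `(1,1)`-double form. -/
def gd : DForm n 1 1 := fun I J => if I 0 = J 0 then 1 else 0

/-- Powers `g^p` of the metric in the ring of double forms. -/
def gpow : (p : ℕ) → DForm n p p
  | 0 => fun _ _ => 1
  | p + 1 => mul (gpow p) gd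

/-- Powers `ω^k` of a `(p,p)`-double form in the ring of double forms. -/
def pow {p : ℕ} (ω : DForm n p p) : (k : ℕ) → DForm n (p * k) (p * k)
  | 0 => fun _ _ => 1
  | k + 1 => mul (pow ω k) ω

/-- The natural pointwise inner product on `(p,q)`-double forms. -/
def innerPQ {p q : ℕ} (ω θ : DForm n p q) : ℝ :=
  (((p.factorial * q.factorial : ℕ) : ℝ))⁻¹ *
    ∑ I : Fin p → Fin n, ∑ J : Fin q → Fin n, ω I J * θ I J

/-- The sign of the permutation of `{1,…,n}` obtained by concatenating the
multi-indices `K` and `I` (zero if it is not a permutation). -/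
def epsSign {p : ℕ} (hp : p ≤ n) (K : Fin p → Fin n) (I : Fin (n - p) → Fin n) : ℝ :=
  if h : Function.Bijective
      (fun a : Fin n => Fin.append K I (Fin.cast (by omega) a)) then
    ((Equiv.Perm.sign (Equiv.ofBijective _ h) : ℤ) : ℝ)
  else 0

/-- The generalized Hodge star operator on double forms, acting as the usual
Hodge star on each factor. -/
def hstar {p q : ℕ} (hp : p ≤ n) (hq : q ≤ n) (ω : DForm n p q) :
    DForm n (n - p) (n - q) :=
  fun I J =>
    (((p.factorial * q.factorial : ℕ) : ℝ))⁻¹ *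
      ∑ K : Fin p → Fin n, ∑ L : Fin q → Fin n,
        epsSign hp K I * epsSign hq L J * ω K L

/-- The operator `F_h` associated with a symmetric bilinear form `h`:
in an orthonormal basis diagonalizing `h` it multiplies the `(I,J)` component by
the sum of the eigenvalues of `h` over the indices in `I` and `J`.
Coordinate-free version: insert the endomorphism of `h` in each slot. -/
def Fh {p q : ℕ} (h : Fin n → Fin n → ℝ) (ω : DForm n p q) : DForm n p q :=
  fun I J =>
    (∑ k : Fin p, ∑ i : Fin n, h (I k) i * ω (Function.update I k i) J) +
    (∑ k : Fin q, ∑ i : Fin n, h (J k) i * ω I (Function.update J k i))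

/-- A bilinear form on `ℝⁿ` viewed as a `(1,1)`-double form. -/
def ofBilin (h : Fin n → Fin n → ℝ) : DForm n 1 1 := fun I J => h (I 0) (J 0)

/-- The first Bianchi identity for a `(2,2)`-double form. -/
def Bianchi1 (R : DForm n 2 2) : Prop :=
  ∀ x y z u : Fin n,
    R ![x, y] ![z, u] + R ![y, z] ![x, u] + R ![z, x] ![y, u] = 0

end DForm

end
section Helpers

variable {n : ℕ}

lemma sum_precomp {m : ℕ} (σ : Equiv.Perm (Fin m)) (f : (Fin m → Fin n) → ℝ) :
    ∑ I : Fin m → Fin n, f (I ∘ σ) = ∑ I : Fin m → Fin n, f I := by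
  apply Fintype.sum_bijective (fun I : Fin m → Fin n => I ∘ σ)
  · constructor
    · intro a b h
      funext x
      have := congrFun h (σ.symm x)
      simpa using this
    · intro b
      exact ⟨b ∘ σ.symm, by funext x; simp⟩
  · intro I; rfl

lemma sign_sq {m : ℕ} (σ : Equiv.Perm (Fin m)) :
    ((Equiv.Perm.sign σ : ℤ) : ℝ) * ((Equiv.Perm.sign σ : ℤ) : ℝ) = 1 := by
  rcases Int.units_eq_one_or (Equiv.Perm.sign σ) with h | h <;> simp [h]

lemma cast'_isAlt {p q p' q' : ℕ} (hp : p = p') (hq : q = q') (ω : DForm n p q)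
    (h : ω.IsAlt) : (DForm.cast' hp hq ω).IsAlt := by
  subst hp; subst hq; exact h

lemma sum_comm4 {ι₁ ι₂ ι₃ ι₄ M : Type*} [Fintype ι₁] [Fintype ι₂] [Fintype ι₃] [Fintype ι₄]
    [AddCommMonoid M] (f : ι₁ → ι₂ → ι₃ → ι₄ → M) :
    ∑ a, ∑ b, ∑ c, ∑ d, f a b c d = ∑ c, ∑ d, ∑ a, ∑ b, f a b c d :=
  calc ∑ a, ∑ b, ∑ c, ∑ d, f a b c d
      = ∑ a, ∑ c, ∑ b, ∑ d, f a b c d :=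
        Finset.sum_congr rfl fun a _ => Finset.sum_comm
    _ = ∑ c, ∑ a, ∑ b, ∑ d, f a b c d := Finset.sum_comm
    _ = ∑ c, ∑ a, ∑ d, ∑ b, f a b c d :=
        Finset.sum_congr rfl fun c _ => Finset.sum_congr rfl fun a _ => Finset.sum_comm
    _ = ∑ c, ∑ d, ∑ a, ∑ b, f a b c d :=
        Finset.sum_congr rfl fun c _ => Finset.sum_comm

lemma sum_castcomp {m m' : ℕ} (h : m = m') (f : (Fin m' → Fin n) → ℝ) :
    ∑ I : Fin m → Fin n, f (fun a => I (Fin.cast h.symm a)) = ∑ I : Fin m' → Fin n, f I := by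
  subst h; rfl

lemma sum_cons {m : ℕ} (f : (Fin (m+1) → Fin n) → ℝ) :
    ∑ I : Fin (m+1) → Fin n, f I = ∑ i : Fin n, ∑ I : Fin m → Fin n, f (Fin.cons i I) := by
  rw [← Equiv.sum_comp (Fin.consEquiv (fun _ => Fin n)) f, Fintype.sum_prod_type]
  rfl

end Helpers
lemma main_aux {n p q : ℕ} (hp : p + 1 = 1 + p) (hq : q + 1 = 1 + q)
    (ω₁ : DForm n p q) (ω₂ : DForm n (p + 1) (q + 1)) (h₂ : DForm.IsAlt ω₂) :
    DForm.innerPQ (DForm.mul DForm.gd ω₁) (DForm.cast' hp hq ω₂) =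
      DForm.innerPQ ω₁ (DForm.contr ω₂) := by
  classical
  obtain ⟨aL, aR, -⟩ := cast'_isAlt hp hq ω₂ h₂
  set W := DForm.cast' hp hq ω₂ with hW
  simp only [DForm.innerPQ, DForm.mul, DForm.contr, Nat.factorial_one, one_mul, mul_one]
  -- key: each (σ,τ)-term of the product equals the identity-term
  have key : ∀ (σ : Equiv.Perm (Fin (1 + p))) (τ : Equiv.Perm (Fin (1 + q))),
      (∑ I : Fin (1 + p) → Fin n, ∑ J : Fin (1 + q) → Fin n,
        ((((Equiv.Perm.sign σ : ℤ) : ℝ) * ((Equiv.Perm.sign τ : ℤ) : ℝ) *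
            DForm.gd (fun a => I (σ (Fin.castAdd p a))) (fun b => J (τ (Fin.castAdd q b)))) *
            ω₁ (fun a => I (σ (Fin.natAdd 1 a))) (fun b => J (τ (Fin.natAdd 1 b)))) * W I J)
      = ∑ I : Fin (1 + p) → Fin n, ∑ J : Fin (1 + q) → Fin n,
          ((((1:ℝ) * (1:ℝ) *
            DForm.gd (fun a => I (Fin.castAdd p a)) (fun b => J (Fin.castAdd q b))) *
            ω₁ (fun a => I (Fin.natAdd 1 a)) (fun b => J (Fin.natAdd 1 b))) * W I J) := by
    intro σ τ
    show ∑ I : Fin (1 + p) → Fin n, ∑ J : Fin (1 + q) → Fin n,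
        (fun (I : Fin (1 + p) → Fin n) (J : Fin (1 + q) → Fin n) =>
          ((((Equiv.Perm.sign σ : ℤ) : ℝ) * ((Equiv.Perm.sign τ : ℤ) : ℝ) *
              DForm.gd (fun a => I (σ (Fin.castAdd p a))) (fun b => J (τ (Fin.castAdd q b)))) *
              ω₁ (fun a => I (σ (Fin.natAdd 1 a))) (fun b => J (τ (Fin.natAdd 1 b)))) * W I J) I J
      = _
    generalize hF : (fun (I : Fin (1 + p) → Fin n) (J : Fin (1 + q) → Fin n) =>
          ((((Equiv.Perm.sign σ : ℤ) : ℝ) * ((Equiv.Perm.sign τ : ℤ) : ℝ) *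
              DForm.gd (fun a => I (σ (Fin.castAdd p a))) (fun b => J (τ (Fin.castAdd q b)))) *
              ω₁ (fun a => I (σ (Fin.natAdd 1 a))) (fun b => J (τ (Fin.natAdd 1 b)))) * W I J) = f
    calc ∑ I : Fin (1 + p) → Fin n, ∑ J : Fin (1 + q) → Fin n, f I J
        = ∑ I : Fin (1 + p) → Fin n, ∑ J : Fin (1 + q) → Fin n, f I (J ∘ ⇑τ⁻¹) :=
          Finset.sum_congr rfl fun I _ => (sum_precomp τ⁻¹ (fun J => f I J)).symm
      _ = ∑ I : Fin (1 + p) → Fin n, ∑ J : Fin (1 + q) → Fin n, f (I ∘ ⇑σ⁻¹) (J ∘ ⇑τ⁻¹) :=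
          (sum_precomp σ⁻¹ (fun I => ∑ J : Fin (1 + q) → Fin n, f I (J ∘ ⇑τ⁻¹))).symm
      _ = ∑ I : Fin (1 + p) → Fin n, ∑ J : Fin (1 + q) → Fin n,
          ((((1:ℝ) * (1:ℝ) *
              DForm.gd (fun a => I (Fin.castAdd p a)) (fun b => J (Fin.castAdd q b))) *
              ω₁ (fun a => I (Fin.natAdd 1 a)) (fun b => J (Fin.natAdd 1 b))) * W I J) := by
          refine Finset.sum_congr rfl fun I _ => Finset.sum_congr rfl fun J _ => ?_
          rw [← hF]
          simp only [Function.comp_apply, show ∀ x, σ⁻¹ (σ x) = x from fun x => σ.symm_apply_apply x,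
              show ∀ x, τ⁻¹ (τ x) = x from fun x => τ.symm_apply_apply x]
          rw [aL σ⁻¹ I (J ∘ ⇑τ⁻¹), aR τ⁻¹ I J, Equiv.Perm.sign_inv, Equiv.Perm.sign_inv]
          rcases Int.units_eq_one_or (Equiv.Perm.sign σ) with h1 | h1 <;>
            rcases Int.units_eq_one_or (Equiv.Perm.sign τ) with h2 | h2 <;>
              simp only [h1, h2] <;> push_cast <;> ring
  have Tstep : (∑ I : Fin (1 + p) → Fin n, ∑ J : Fin (1 + q) → Fin n,
          ((((1:ℝ) * (1:ℝ) *
            DForm.gd (fun a => I (Fin.castAdd p a)) (fun b => J (Fin.castAdd q b))) *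
            ω₁ (fun a => I (Fin.natAdd 1 a)) (fun b => J (Fin.natAdd 1 b))) * W I J))
      = ∑ I : Fin p → Fin n, ∑ J : Fin q → Fin n,
          ω₁ I J * ∑ i : Fin n, ω₂ (Fin.cons i I) (Fin.cons i J) := by
    calc ∑ I : Fin (1 + p) → Fin n, ∑ J : Fin (1 + q) → Fin n,
          ((((1:ℝ) * (1:ℝ) *
            DForm.gd (fun a => I (Fin.castAdd p a)) (fun b => J (Fin.castAdd q b))) *
            ω₁ (fun a => I (Fin.natAdd 1 a)) (fun b => J (Fin.natAdd 1 b))) * W I J)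
        = ∑ I : Fin (p + 1) → Fin n, ∑ J : Fin (1 + q) → Fin n,
          ((((1:ℝ) * (1:ℝ) *
            DForm.gd (fun a => I (Fin.cast hp.symm (Fin.castAdd p a)))
              (fun b => J (Fin.castAdd q b))) *
            ω₁ (fun a => I (Fin.cast hp.symm (Fin.natAdd 1 a)))
              (fun b => J (Fin.natAdd 1 b))) *
            W (fun a => I (Fin.cast hp.symm a)) J) :=
          (sum_castcomp hp (fun I : Fin (1 + p) → Fin n =>
            ∑ J : Fin (1 + q) → Fin n,
              ((((1:ℝ) * (1:ℝ) *
                DForm.gd (fun a => I (Fin.castAdd p a)) (fun b => J (Fin.castAdd q b))) *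
                ω₁ (fun a => I (Fin.natAdd 1 a)) (fun b => J (Fin.natAdd 1 b))) * W I J))).symm
      _ = ∑ I : Fin (p + 1) → Fin n, ∑ J : Fin (q + 1) → Fin n,
          ((((1:ℝ) * (1:ℝ) *
            DForm.gd (fun a => I (Fin.cast hp.symm (Fin.castAdd p a)))
              (fun b => J (Fin.cast hq.symm (Fin.castAdd q b)))) *
            ω₁ (fun a => I (Fin.cast hp.symm (Fin.natAdd 1 a)))
              (fun b => J (Fin.cast hq.symm (Fin.natAdd 1 b)))) *
            W (fun a => I (Fin.cast hp.symm a)) (fun b => J (Fin.cast hq.symm b))) :=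
          Finset.sum_congr rfl fun I _ =>
          (sum_castcomp hq (fun J : Fin (1 + q) → Fin n =>
              ((((1:ℝ) * (1:ℝ) *
                DForm.gd (fun a => I (Fin.cast hp.symm (Fin.castAdd p a)))
                  (fun b => J (Fin.castAdd q b))) *
                ω₁ (fun a => I (Fin.cast hp.symm (Fin.natAdd 1 a)))
                  (fun b => J (Fin.natAdd 1 b))) *
                W (fun a => I (Fin.cast hp.symm a)) J))).symm
      _ = ∑ I : Fin (p + 1) → Fin n, ∑ J : Fin (q + 1) → Fin n,
          (if I 0 = J 0 then (1:ℝ) else 0) *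
            (ω₁ (fun a => I a.succ) (fun b => J b.succ) * ω₂ I J) := by
          refine Finset.sum_congr rfl fun I _ => Finset.sum_congr rfl fun J _ => ?_
          have e1 : DForm.gd (fun a : Fin 1 => I (Fin.cast hp.symm (Fin.castAdd p a)))
              (fun b : Fin 1 => J (Fin.cast hq.symm (Fin.castAdd q b)))
              = if I 0 = J 0 then (1:ℝ) else 0 := by
            simp only [DForm.gd]
            have h1 : Fin.cast hp.symm (Fin.castAdd p (0 : Fin 1)) = (0 : Fin (p+1)) := by
              ext; simp
            have h2 : Fin.cast hq.symm (Fin.castAdd q (0 : Fin 1)) = (0 : Fin (q+1)) := by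
              ext; simp
            simp only [h1, h2]
          have e2 : (fun a : Fin p => I (Fin.cast hp.symm (Fin.natAdd 1 a)))
              = fun a : Fin p => I a.succ := by
            funext a; congr 1; ext; simp [Nat.add_comm]
          have e3 : (fun b : Fin q => J (Fin.cast hq.symm (Fin.natAdd 1 b)))
              = fun b : Fin q => J b.succ := by
            funext b; congr 1; ext; simp [Nat.add_comm]
          have e4 : W (fun a => I (Fin.cast hp.symm a)) (fun b => J (Fin.cast hq.symm b))
              = ω₂ I J := by
            rw [hW]
            simp only [DForm.cast']
            congr 1 <;> funext a <;> congr 1 <;> ext <;> simp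
          rw [e1, e2, e3, e4]
          ring
      _ = ∑ i : Fin n, ∑ I : Fin p → Fin n, ∑ j : Fin n, ∑ J : Fin q → Fin n,
          (if i = j then (1:ℝ) else 0) *
            (ω₁ I J * ω₂ (Fin.cons i I) (Fin.cons j J)) := by
          rw [sum_cons (f := fun I : Fin (p+1) → Fin n => ∑ J : Fin (q+1) → Fin n,
            (if I 0 = J 0 then (1:ℝ) else 0) *
              (ω₁ (fun a => I a.succ) (fun b => J b.succ) * ω₂ I J))]
          refine Finset.sum_congr rfl fun i _ => Finset.sum_congr rfl fun I _ => ?_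
          simp only [Fin.cons_zero, Fin.cons_succ]
          rw [sum_cons (f := fun J : Fin (q+1) → Fin n =>
            (if i = J 0 then (1:ℝ) else 0) *
              (ω₁ I (fun b => J b.succ) * ω₂ (Fin.cons i I) J))]
          simp only [Fin.cons_zero, Fin.cons_succ]
      _ = ∑ i : Fin n, ∑ I : Fin p → Fin n, ∑ J : Fin q → Fin n,
          ω₁ I J * ω₂ (Fin.cons i I) (Fin.cons i J) := by
          refine Finset.sum_congr rfl fun i _ => Finset.sum_congr rfl fun I _ => ?_
          rw [Finset.sum_comm]
          refine Finset.sum_congr rfl fun J _ => ?_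
          simp only [ite_mul, one_mul, zero_mul]
          rw [Finset.sum_ite_eq]
          simp
      _ = ∑ I : Fin p → Fin n, ∑ J : Fin q → Fin n,
          ω₁ I J * ∑ i : Fin n, ω₂ (Fin.cons i I) (Fin.cons i J) := by
          rw [Finset.sum_comm]
          refine Finset.sum_congr rfl fun I _ => ?_
          rw [Finset.sum_comm]
          refine Finset.sum_congr rfl fun J _ => ?_
          rw [Finset.mul_sum]
  -- assembly
  calc (↑((1 + p).factorial * (1 + q).factorial) : ℝ)⁻¹ *
      ∑ I : Fin (1 + p) → Fin n, ∑ J : Fin (1 + q) → Fin n,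
        (((↑(p.factorial * q.factorial) : ℝ)⁻¹ *
            ∑ σ : Equiv.Perm (Fin (1 + p)), ∑ τ : Equiv.Perm (Fin (1 + q)),
              ((((Equiv.Perm.sign σ : ℤ) : ℝ) * ((Equiv.Perm.sign τ : ℤ) : ℝ) *
                  DForm.gd (fun a => I (σ (Fin.castAdd p a))) (fun b => J (τ (Fin.castAdd q b)))) *
                ω₁ (fun a => I (σ (Fin.natAdd 1 a))) (fun b => J (τ (Fin.natAdd 1 b))))) * W I J)
      = (↑((1 + p).factorial * (1 + q).factorial) : ℝ)⁻¹ *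
        ∑ I : Fin (1 + p) → Fin n, ∑ J : Fin (1 + q) → Fin n,
          ((↑(p.factorial * q.factorial) : ℝ)⁻¹ *
            ∑ σ : Equiv.Perm (Fin (1 + p)), ∑ τ : Equiv.Perm (Fin (1 + q)),
              (((((Equiv.Perm.sign σ : ℤ) : ℝ) * ((Equiv.Perm.sign τ : ℤ) : ℝ) *
                  DForm.gd (fun a => I (σ (Fin.castAdd p a))) (fun b => J (τ (Fin.castAdd q b)))) *
                ω₁ (fun a => I (σ (Fin.natAdd 1 a))) (fun b => J (τ (Fin.natAdd 1 b)))) * W I J)) := by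
        congr 1
        refine Finset.sum_congr rfl fun I _ => Finset.sum_congr rfl fun J _ => ?_
        rw [mul_assoc]
        congr 1
        simp only [Finset.sum_mul]
    _ = (↑((1 + p).factorial * (1 + q).factorial) : ℝ)⁻¹ *
        ((↑(p.factorial * q.factorial) : ℝ)⁻¹ *
          ∑ I : Fin (1 + p) → Fin n, ∑ J : Fin (1 + q) → Fin n,
            ∑ σ : Equiv.Perm (Fin (1 + p)), ∑ τ : Equiv.Perm (Fin (1 + q)),
              (((((Equiv.Perm.sign σ : ℤ) : ℝ) * ((Equiv.Perm.sign τ : ℤ) : ℝ) *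
                  DForm.gd (fun a => I (σ (Fin.castAdd p a))) (fun b => J (τ (Fin.castAdd q b)))) *
                ω₁ (fun a => I (σ (Fin.natAdd 1 a))) (fun b => J (τ (Fin.natAdd 1 b)))) * W I J)) := by
        simp only [← Finset.mul_sum]
    _ = (↑((1 + p).factorial * (1 + q).factorial) : ℝ)⁻¹ *
        ((↑(p.factorial * q.factorial) : ℝ)⁻¹ *
          ∑ σ : Equiv.Perm (Fin (1 + p)), ∑ τ : Equiv.Perm (Fin (1 + q)),
            ∑ I : Fin (1 + p) → Fin n, ∑ J : Fin (1 + q) → Fin n,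
              (((((Equiv.Perm.sign σ : ℤ) : ℝ) * ((Equiv.Perm.sign τ : ℤ) : ℝ) *
                  DForm.gd (fun a => I (σ (Fin.castAdd p a))) (fun b => J (τ (Fin.castAdd q b)))) *
                ω₁ (fun a => I (σ (Fin.natAdd 1 a))) (fun b => J (τ (Fin.natAdd 1 b)))) * W I J)) := by
        congr 2
        exact sum_comm4 _
    _ = (↑((1 + p).factorial * (1 + q).factorial) : ℝ)⁻¹ *
        ((↑(p.factorial * q.factorial) : ℝ)⁻¹ *
          ∑ σ : Equiv.Perm (Fin (1 + p)), ∑ τ : Equiv.Perm (Fin (1 + q)),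
            ∑ I : Fin (1 + p) → Fin n, ∑ J : Fin (1 + q) → Fin n,
              ((((1:ℝ) * (1:ℝ) *
                  DForm.gd (fun a => I (Fin.castAdd p a)) (fun b => J (Fin.castAdd q b))) *
                ω₁ (fun a => I (Fin.natAdd 1 a)) (fun b => J (Fin.natAdd 1 b))) * W I J)) := by
        congr 2
        exact Finset.sum_congr rfl fun σ _ => Finset.sum_congr rfl fun τ _ => key σ τ
    _ = (↑((1 + p).factorial * (1 + q).factorial) : ℝ)⁻¹ *
        ((↑(p.factorial * q.factorial) : ℝ)⁻¹ *
          ((((1 + p).factorial : ℝ) * ((1 + q).factorial : ℝ)) *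
            ∑ I : Fin p → Fin n, ∑ J : Fin q → Fin n,
              ω₁ I J * ∑ i : Fin n, ω₂ (Fin.cons i I) (Fin.cons i J))) := by
        rw [Tstep]
        congr 2
        rw [Finset.sum_const, Finset.sum_const]
        simp only [Finset.card_univ, Fintype.card_perm, Fintype.card_fin, nsmul_eq_mul]
        ring
    _ = (↑(p.factorial * q.factorial) : ℝ)⁻¹ *
          ∑ I : Fin p → Fin n, ∑ J : Fin q → Fin n,
            ω₁ I J * ∑ i : Fin n, ω₂ (Fin.cons i I) (Fin.cons i J) := by
        have h1 : (((1 + p).factorial : ℕ) : ℝ) ≠ 0 :=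
          Nat.cast_ne_zero.mpr (Nat.factorial_ne_zero _)
        have h2 : (((1 + q).factorial : ℕ) : ℝ) ≠ 0 :=
          Nat.cast_ne_zero.mpr (Nat.factorial_ne_zero _)
        push_cast
        field_simp

/-- Multiplication by the metric `g` and the contraction `c` are
adjoint with respect to the pointwise inner product on double forms:
`⟨gω₁, ω₂⟩ = ⟨ω₁, cω₂⟩`. -/
theorem g_contr_adjoint {n p q : ℕ} (ω₁ : DForm n p q) (ω₂ : DForm n (p + 1) (q + 1))
    (h₁ : DForm.IsAlt ω₁) (h₂ : DForm.IsAlt ω₂) :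
    DForm.innerPQ (DForm.mul DForm.gd ω₁) (DForm.cast' (by omega) (by omega) ω₂) =
      DForm.innerPQ ω₁ (DForm.contr ω₂) := by
  exact main_aux (by omega) (by omega) ω₁ ω₂ h₂
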